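/- arXiv:math/0607614 — 3 statements merged into one kernel-verified Lean document; each statement's English description precedes it below -/
import Mathlib

section
/- For any nonzero complex number a and any additive subgroup G of ℂ, the generalized Virasoro algebras Vir[G] and Vir[aG] are isomorphic as Lie algebras. -/
open Finsupp

/-- Bracket on basis elements of the generalized Virasoro algebra `Vir[G]`:
`none` is the central element `C`, `some x` is `d_x`. -/
noncomputable def virBasisBr (G : AddSubgroup ℂ) : Option ↥G → Option ↥G → (Option ↥G →₀ ℂ)
  | Option.some x, Option.some y =>
      ((y : ℂ) - (x : ℂ)) • Finsupp.single (some (x + y)) (1 : ℂ) +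
        (if (x : ℂ) = -(y : ℂ) then (((x : ℂ) ^ 3 - (x : ℂ)) / 12) • Finsupp.single (none : Option ↥G) (1 : ℂ) else 0)
  | _, _ => 0

/-- The bracket on the free vector space with basis `{C} ∪ {d_x : x ∈ G}`. -/
noncomputable def virBr (G : AddSubgroup ℂ) (u v : Option ↥G →₀ ℂ) : Option ↥G →₀ ℂ :=
  u.sum fun i a => v.sum fun j c => (a * c) • virBasisBr G i j

section VirAux

@[simp] lemma virBasisBr_none_left (G : AddSubgroup ℂ) (j : Option ↥G) :
    virBasisBr G Option.none j = 0 := by cases j <;> rfl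

@[simp] lemma virBasisBr_none_right (G : AddSubgroup ℂ) (i : Option ↥G) :
    virBasisBr G i Option.none = 0 := by cases i <;> rfl

lemma virBasisBr_some_some (G : AddSubgroup ℂ) (x y : ↥G) :
    virBasisBr G (Option.some x) (Option.some y) =
      ((y : ℂ) - (x : ℂ)) • Finsupp.single (some (x + y)) (1 : ℂ) +
        (if (x : ℂ) = -(y : ℂ) then (((x : ℂ) ^ 3 - (x : ℂ)) / 12) •
          Finsupp.single (none : Option ↥G) (1 : ℂ) else 0) := rfl

/-- The bracket as a bilinear map. -/
noncomputable def virBrL (G : AddSubgroup ℂ) :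
    (Option ↥G →₀ ℂ) →ₗ[ℂ] (Option ↥G →₀ ℂ) →ₗ[ℂ] (Option ↥G →₀ ℂ) :=
  Finsupp.lsum ℂ fun i => LinearMap.toSpanSingleton ℂ _
    (Finsupp.lsum ℂ fun j => LinearMap.toSpanSingleton ℂ _ (virBasisBr G i j))

lemma virBrL_apply (G : AddSubgroup ℂ) (u v : Option ↥G →₀ ℂ) :
    virBrL G u v = u.sum fun i c => v.sum fun j d => (c * d) • virBasisBr G i j := by
  have h0 : virBrL G u v = (LinearMap.applyₗ v) (virBrL G u) := rfl
  rw [h0, virBrL, Finsupp.lsum_apply, map_finsuppSum]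
  refine Finsupp.sum_congr fun i _ => ?_
  show ((LinearMap.toSpanSingleton ℂ _
      (Finsupp.lsum ℂ fun j => LinearMap.toSpanSingleton ℂ _ (virBasisBr G i j))) (u i)) v = _
  rw [LinearMap.toSpanSingleton_apply, LinearMap.smul_apply, Finsupp.lsum_apply, Finsupp.smul_sum]
  refine Finsupp.sum_congr fun j _ => ?_
  rw [LinearMap.toSpanSingleton_apply, smul_smul]

lemma virBr_eq_virBrL (G : AddSubgroup ℂ) (u v : Option ↥G →₀ ℂ) :
    virBr G u v = virBrL G u v := (virBrL_apply G u v).symm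

lemma virBrL_single_single (G : AddSubgroup ℂ) (i j : Option ↥G) (c d : ℂ) :
    virBrL G (Finsupp.single i c) (Finsupp.single j d) = (c * d) • virBasisBr G i j := by
  rw [virBrL_apply]
  rw [Finsupp.sum_single_index, Finsupp.sum_single_index]
  · simp
  · rw [Finsupp.sum_single_index] <;> simp

@[simp] lemma virBrL_none_left (G : AddSubgroup ℂ) (c : ℂ) (v : Option ↥G →₀ ℂ) :
    virBrL G (Finsupp.single Option.none c) v = 0 := by
  rw [virBrL_apply, Finsupp.sum_single_index] <;> simp

@[simp] lemma virBrL_none_right (G : AddSubgroup ℂ) (c : ℂ) (u : Option ↥G →₀ ℂ) :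
    virBrL G u (Finsupp.single Option.none c) = 0 := by
  rw [virBrL_apply]
  rw [Finsupp.sum]
  refine Finset.sum_eq_zero fun i _ => ?_
  rw [Finsupp.sum_single_index] <;> simp

variable (G : AddSubgroup ℂ) (a : ℂ)

/-- The additive equivalence `G ≃+ aG`. -/
noncomputable def virPsi (ha : a ≠ 0) : ↥G ≃+ ↥(G.map (AddMonoidHom.mulLeft a)) :=
  AddSubgroup.equivMapOfInjective G (AddMonoidHom.mulLeft a) (mul_right_injective₀ ha)

lemma virPsi_coe (ha : a ≠ 0) (x : ↥G) :
    ((virPsi G a ha x : ↥(G.map (AddMonoidHom.mulLeft a))) : ℂ) = a * x := rfl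

/-- Image of the basis vectors under the isomorphism. -/
noncomputable def virF (ha : a ≠ 0) :
    Option ↥G → (Option ↥(G.map (AddMonoidHom.mulLeft a)) →₀ ℂ)
  | Option.none => a • Finsupp.single Option.none 1
  | Option.some x => a⁻¹ • Finsupp.single (Option.some (virPsi G a ha x)) 1 +
      (if x = 0 then ((1 - a ^ 2) / (24 * a)) • Finsupp.single Option.none 1 else 0)

/-- Image of the basis vectors under the inverse isomorphism. -/
noncomputable def virG (ha : a ≠ 0) :
    Option ↥(G.map (AddMonoidHom.mulLeft a)) → (Option ↥G →₀ ℂ)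
  | Option.none => a⁻¹ • Finsupp.single Option.none 1
  | Option.some y => a • Finsupp.single (Option.some ((virPsi G a ha).symm y)) 1 +
      (if y = 0 then (-((1 - a ^ 2) / (24 * a))) • Finsupp.single Option.none 1 else 0)

variable (ha : a ≠ 0)

lemma virF_none : virF G a ha Option.none = a • Finsupp.single Option.none 1 := rfl
lemma virF_some (x : ↥G) : virF G a ha (Option.some x) =
    a⁻¹ • Finsupp.single (Option.some (virPsi G a ha x)) 1 +
      (if x = 0 then ((1 - a ^ 2) / (24 * a)) • Finsupp.single Option.none 1 else 0) := rfl
lemma virG_none : virG G a ha Option.none = a⁻¹ • Finsupp.single Option.none 1 := rfl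
lemma virG_some (y) : virG G a ha (Option.some y) =
    a • Finsupp.single (Option.some ((virPsi G a ha).symm y)) 1 +
      (if y = 0 then (-((1 - a ^ 2) / (24 * a))) • Finsupp.single Option.none 1 else 0) := rfl

noncomputable def virFL : (Option ↥G →₀ ℂ) →ₗ[ℂ] (Option ↥(G.map (AddMonoidHom.mulLeft a)) →₀ ℂ) :=
  Finsupp.lsum ℂ fun i => LinearMap.toSpanSingleton ℂ _ (virF G a ha i)

noncomputable def virGL : (Option ↥(G.map (AddMonoidHom.mulLeft a)) →₀ ℂ) →ₗ[ℂ] (Option ↥G →₀ ℂ) :=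
  Finsupp.lsum ℂ fun j => LinearMap.toSpanSingleton ℂ _ (virG G a ha j)

lemma virFL_single (i : Option ↥G) (c : ℂ) :
    virFL G a ha (Finsupp.single i c) = c • virF G a ha i := by
  rw [virFL, Finsupp.lsum_single, LinearMap.toSpanSingleton_apply]

lemma virGL_single (j) (c : ℂ) :
    virGL G a ha (Finsupp.single j c) = c • virG G a ha j := by
  rw [virGL, Finsupp.lsum_single, LinearMap.toSpanSingleton_apply]

lemma virGL_virF (i : Option ↥G) : virGL G a ha (virF G a ha i) = Finsupp.single i 1 := by
  cases i with
  | none =>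
      rw [virF_none, map_smul, virGL_single, one_smul, virG_none]
      match_scalars
      field_simp
  | some x =>
      rw [virF_some, map_add, map_smul, virGL_single, one_smul, virG_some,
        AddEquiv.symm_apply_apply]
      by_cases hx : x = 0
      · subst hx
        rw [if_pos rfl, if_pos (map_zero (virPsi G a ha)), map_smul, virGL_single, one_smul,
          virG_none]
        match_scalars <;> (field_simp; try ring)
      · have hpsi : virPsi G a ha x ≠ 0 := fun h => hx ((virPsi G a ha).map_eq_zero_iff.mp h)
        rw [if_neg hx, if_neg hpsi, map_zero, add_zero, add_zero]
        match_scalars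
        field_simp

lemma virFL_virG (j) : virFL G a ha (virG G a ha j) = Finsupp.single j 1 := by
  cases j with
  | none =>
      rw [virG_none, map_smul, virFL_single, one_smul, virF_none]
      match_scalars
      field_simp
  | some y =>
      rw [virG_some, map_add, map_smul, virFL_single, one_smul, virF_some,
        AddEquiv.apply_symm_apply]
      by_cases hy : y = 0
      · subst hy
        have h0 : (virPsi G a ha).symm 0 = 0 := map_zero _
        rw [if_pos rfl, if_pos h0, map_smul, virFL_single, one_smul, virF_none]
        match_scalars <;> (field_simp; try ring)
      · have hpsi : (virPsi G a ha).symm y ≠ 0 := fun h => hy (by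
          simpa using congrArg (virPsi G a ha) h)
        rw [if_neg hy, if_neg hpsi, map_zero, add_zero, add_zero]
        match_scalars
        field_simp

lemma virGF : (virGL G a ha).comp (virFL G a ha) = LinearMap.id := by
  apply Finsupp.lhom_ext
  intro i c
  rw [LinearMap.comp_apply, LinearMap.id_apply, virFL_single, map_smul, virGL_virF,
    Finsupp.smul_single, smul_eq_mul, mul_one]

lemma virFG : (virFL G a ha).comp (virGL G a ha) = LinearMap.id := by
  apply Finsupp.lhom_ext
  intro j c
  rw [LinearMap.comp_apply, LinearMap.id_apply, virGL_single, map_smul, virFL_virG,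
    Finsupp.smul_single, smul_eq_mul, mul_one]

lemma virKey (i j : Option ↥G) :
    virFL G a ha (virBasisBr G i j) =
      virBrL (G.map (AddMonoidHom.mulLeft a)) (virF G a ha i) (virF G a ha j) := by
  cases i with
  | none =>
      rw [virBasisBr_none_left, map_zero, virF_none, map_smul, LinearMap.smul_apply,
        virBrL_none_left, smul_zero]
  | some x =>
    cases j with
    | none =>
        rw [virBasisBr_none_right, map_zero, virF_none, map_smul, virBrL_none_right, smul_zero]
    | some y =>
        rw [virBasisBr_some_some, virF_some, virF_some]
        have hcond : ((virPsi G a ha x : ℂ) = -((virPsi G a ha y : ℂ))) ↔ ((x : ℂ) = -(y : ℂ)) := by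
          rw [virPsi_coe, virPsi_coe, ← mul_neg]
          exact mul_right_inj' ha
        have hsum : virPsi G a ha (x + y) = virPsi G a ha x + virPsi G a ha y := map_add _ _ _
        -- expand the right-hand side
        have hrhs : virBrL (G.map (AddMonoidHom.mulLeft a))
            (a⁻¹ • Finsupp.single (Option.some (virPsi G a ha x)) 1 +
              (if x = 0 then ((1 - a ^ 2) / (24 * a)) • Finsupp.single Option.none 1 else 0))
            (a⁻¹ • Finsupp.single (Option.some (virPsi G a ha y)) 1 +
              (if y = 0 then ((1 - a ^ 2) / (24 * a)) • Finsupp.single Option.none 1 else 0)) =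
            (a⁻¹ * a⁻¹) • virBasisBr (G.map (AddMonoidHom.mulLeft a))
              (Option.some (virPsi G a ha x)) (Option.some (virPsi G a ha y)) := by
          by_cases hx : x = 0 <;> by_cases hy : y = 0 <;>
            simp only [hx, hy, if_pos, if_true, if_neg, if_false, reduceIte, map_add, map_smul,
              LinearMap.add_apply, LinearMap.smul_apply, map_zero, LinearMap.zero_apply,
              virBrL_single_single, virBrL_none_left, virBrL_none_right, smul_zero, zero_add,
              add_zero, one_mul, mul_one, smul_smul, virBasisBr_none_left, virBasisBr_none_right,
              smul_add, zero_smul] <;> module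
        rw [hrhs, virBasisBr_some_some, ← hsum]
        by_cases hc : (x : ℂ) = -(y : ℂ)
        · have hxy0 : x + y = 0 := by
            exact Subtype.ext (by push_cast; rw [hc]; ring)
          rw [map_add, map_smul, virFL_single, one_smul, virF_some, if_pos hxy0, if_pos hc,
            if_pos (hcond.mpr hc), map_smul, virFL_single, one_smul, virF_none]
          rw [virPsi_coe, virPsi_coe, hc]
          match_scalars <;> field_simp <;> ring
        · have hxy0 : ¬(x + y = 0) := by
            intro h
            apply hc
            have h2 := congrArg (Subtype.val) h
            push_cast at h2
            linear_combination h2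
          rw [map_add, map_smul, virFL_single, one_smul, virF_some, if_neg hxy0, if_neg hc,
            if_neg (fun h => hc (hcond.mp h)), map_zero, add_zero, add_zero, add_zero]
          rw [virPsi_coe, virPsi_coe]
          match_scalars
          field_simp

end VirAux

/-- for any nonzero `a : ℂ`, `Vir[G] ≅ Vir[aG]` as Lie algebras, i.e. there is a
linear equivalence of the underlying spaces intertwining the brackets. -/
theorem virasoro_iso_smul (G : AddSubgroup ℂ) (a : ℂ) (ha : a ≠ 0) :
    ∃ e : (Option ↥G →₀ ℂ) ≃ₗ[ℂ] (Option ↥(G.map (AddMonoidHom.mulLeft a)) →₀ ℂ),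
      ∀ u v : Option ↥G →₀ ℂ,
        e (virBr G u v) = virBr (G.map (AddMonoidHom.mulLeft a)) (e u) (e v) := by
  refine ⟨LinearEquiv.ofLinear (virFL G a ha) (virGL G a ha) (virFG G a ha) (virGF G a ha),
    fun u v => ?_⟩
  have key : (virBrL G).compr₂ (virFL G a ha) =
      (virBrL (G.map (AddMonoidHom.mulLeft a))).compl₁₂ (virFL G a ha) (virFL G a ha) := by
    refine Finsupp.lhom_ext' fun i => LinearMap.ext_ring (Finsupp.lhom_ext' fun j =>
      LinearMap.ext_ring ?_)
    simp only [LinearMap.comp_apply, Finsupp.lsingle_apply, LinearMap.compr₂_apply,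
      LinearMap.compl₁₂_apply, virFL_single, one_smul]
    rw [virBrL_single_single, one_mul, one_smul]
    exact virKey G a ha i j
  have hkey := LinearMap.congr_fun (LinearMap.congr_fun key u) v
  simp only [LinearMap.compr₂_apply, LinearMap.compl₁₂_apply] at hkey
  simpa only [virBr_eq_virBrL, LinearEquiv.ofLinear_apply] using hkey
end

section
/- Let G be a nonzero additive subgroup of ℂ and α, β ∈ ℂ. The intermediate series module V(α,β,G) over Vir[G] is reducible if and only if α ∈ G and β ∈ {0, 1}. -/
open Finsupp

/-- The action of `d_x` on the intermediate series module `V(α,β,G)` with basis `{v_y : y ∈ G}`: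
`d_x v_y = (α + y + xβ) v_{x+y}` (the central element `C` acts by `0`). -/
noncomputable def dActL (G : AddSubgroup ℂ) (α β : ℂ) (x : ↥G) : (↥G →₀ ℂ) →ₗ[ℂ] (↥G →₀ ℂ) :=
  Finsupp.lsum ℂ fun y : ↥G =>
    LinearMap.toSpanSingleton ℂ (↥G →₀ ℂ) ((α + (y : ℂ) + (x : ℂ) * β) • Finsupp.single (x + y) (1 : ℂ))

lemma dActL_single (G : AddSubgroup ℂ) (α β : ℂ) (x y : ↥G) (c : ℂ) :
    dActL G α β x (Finsupp.single y c) =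
      (c * (α + (y : ℂ) + (x : ℂ) * β)) • Finsupp.single (x + y) (1 : ℂ) := by
  rw [dActL, Finsupp.lsum_single, LinearMap.toSpanSingleton_apply, smul_smul]

lemma dActL_zero_apply (G : AddSubgroup ℂ) (α β : ℂ) (f : ↥G →₀ ℂ) (t : ↥G) :
    dActL G α β 0 f t = (α + (t : ℂ)) * f t := by
  rw [dActL, Finsupp.lsum_apply, Finsupp.sum_apply]
  rw [Finsupp.sum]
  simp only [LinearMap.toSpanSingleton_apply, AddSubgroup.coe_zero, zero_mul, add_zero,
    zero_add, Finsupp.smul_apply, Finsupp.single_apply, smul_eq_mul]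
  rw [Finset.sum_eq_single t]
  · by_cases h : f t = 0 <;> simp [h, mul_comm]
  · intro b _ hb
    simp [hb]
  · intro h
    simp [Finsupp.notMem_support_iff.1 h]

lemma single_mem_of_mem (G : AddSubgroup ℂ) (α β : ℂ) (S : Submodule ℂ (↥G →₀ ℂ))
    (hS : ∀ x : ↥G, ∀ v ∈ S, dActL G α β x v ∈ S) :
    ∀ n : ℕ, ∀ f ∈ S, f.support.card ≤ n → ∀ y ∈ f.support, Finsupp.single y (1 : ℂ) ∈ S := by
  intro n
  induction n with
  | zero => intro f _ hc y hy; rw [Nat.le_zero, Finset.card_eq_zero] at hc; simp [hc] at hy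
  | succ n ih =>
    intro f hf hc y hy
    by_cases hsing : f.support = {y}
    · obtain ⟨h1, h2⟩ := Finsupp.support_eq_singleton.1 hsing
      have : Finsupp.single y (1 : ℂ) = (f y)⁻¹ • f := by
        conv_rhs => rw [h2]
        rw [Finsupp.smul_single, Finsupp.single_eq_same, smul_eq_mul, inv_mul_cancel₀ h1]
      rw [this]; exact S.smul_mem _ hf
    · have : ∃ y' ∈ f.support, y' ≠ y := by
        by_contra h
        push_neg at h
        exact hsing (Finset.eq_singleton_iff_unique_mem.2 ⟨hy, h⟩)
      obtain ⟨y', hy', hy'y⟩ := this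
      set g : ↥G →₀ ℂ := dActL G α β 0 f - (α + (y' : ℂ)) • f with hg
      have hgS : g ∈ S := S.sub_mem (hS 0 f hf) (S.smul_mem _ hf)
      have hgt : ∀ t : ↥G, g t = ((t : ℂ) - (y' : ℂ)) * f t := by
        intro t
        rw [hg, Finsupp.sub_apply, Finsupp.smul_apply, dActL_zero_apply, smul_eq_mul]
        ring
      have hsub : g.support ⊆ f.support.erase y' := by
        intro t ht
        rw [Finsupp.mem_support_iff, hgt] at ht
        rcases mul_ne_zero_iff.1 ht with ⟨h1, h2⟩
        refine Finset.mem_erase.2 ⟨?_, Finsupp.mem_support_iff.2 h2⟩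
        intro h; apply h1; rw [h]; ring
      have hcard : g.support.card ≤ n := by
        calc g.support.card ≤ (f.support.erase y').card := Finset.card_le_card hsub
          _ ≤ f.support.card - 1 := by rw [Finset.card_erase_of_mem hy']
          _ ≤ n := by omega
      have hyg : y ∈ g.support := by
        rw [Finsupp.mem_support_iff, hgt]
        refine mul_ne_zero ?_ (Finsupp.mem_support_iff.1 hy)
        intro h
        apply hy'y
        have : (y : ℂ) = (y' : ℂ) := by linear_combination h
        exact (Subtype.coe_injective this).symm
      exact ih g hgS hcard y hyg

lemma key_eq (G : AddSubgroup ℂ) (α β : ℂ) (S : Submodule ℂ (↥G →₀ ℂ))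
    (hS : ∀ x : ↥G, ∀ v ∈ S, dActL G α β x v ∈ S)
    {y z : ↥G} (hy : Finsupp.single y (1 : ℂ) ∈ S) (hz : Finsupp.single z (1 : ℂ) ∉ S) :
    α + (y : ℂ) + ((z : ℂ) - (y : ℂ)) * β = 0 := by
  by_contra h
  apply hz
  have h1 := hS (z - y) _ hy
  rw [dActL_single, one_mul] at h1
  rw [sub_add_cancel] at h1
  have hcoe : ((z - y : ↥G) : ℂ) = (z : ℂ) - (y : ℂ) := rfl
  rw [hcoe] at h1
  have := S.smul_mem (α + (y : ℂ) + ((z : ℂ) - (y : ℂ)) * β)⁻¹ h1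
  rwa [smul_smul, inv_mul_cancel₀ h, one_smul] at this

lemma dActL_apply_at (G : AddSubgroup ℂ) (α β : ℂ) (x : ↥G) (f : ↥G →₀ ℂ) (a : ↥G)
    (h : ∀ y : ↥G, x + y = a → α + (y : ℂ) + (x : ℂ) * β = 0) :
    dActL G α β x f a = 0 := by
  rw [dActL, Finsupp.lsum_apply, Finsupp.sum_apply, Finsupp.sum]
  apply Finset.sum_eq_zero
  intro y _
  simp only [LinearMap.toSpanSingleton_apply, Finsupp.smul_apply, Finsupp.single_apply,
    smul_eq_mul]
  by_cases hxy : x + y = a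
  · rw [h y hxy]; simp
  · simp [hxy]

/-- `V(α,β,G)` is reducible iff `α ∈ G` and `β ∈ {0,1}`. -/
theorem intermediate_series_reducible_iff (G : AddSubgroup ℂ) (hG : G ≠ ⊥) (α β : ℂ) :
    (∃ S : Submodule ℂ (↥G →₀ ℂ),
        (∀ x : ↥G, ∀ v ∈ S, dActL G α β x v ∈ S) ∧ S ≠ ⊥ ∧ S ≠ ⊤) ↔
      (α ∈ G ∧ (β = 0 ∨ β = 1)) := by
  obtain ⟨g, hg⟩ := AddSubgroup.ne_bot_iff_exists_ne_zero.mp hG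
  have hgc : (g : ℂ) ≠ 0 := fun h => hg (Subtype.coe_injective h)
  constructor
  · rintro ⟨S, hS, hbot, htop⟩
    -- get a basis vector in S
    obtain ⟨f, hfS, hfne⟩ := Submodule.ne_bot_iff S |>.1 hbot
    obtain ⟨y₀, hy₀supp⟩ := Finsupp.support_nonempty_iff.2 hfne
    have hy₀ : Finsupp.single y₀ (1 : ℂ) ∈ S :=
      single_mem_of_mem G α β S hS f.support.card f hfS le_rfl y₀ hy₀supp
    -- get a basis vector not in S
    have : ∃ z : ↥G, Finsupp.single z (1 : ℂ) ∉ S := by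
      by_contra h
      push_neg at h
      apply htop
      rw [Submodule.eq_top_iff']
      intro v
      induction v using Finsupp.induction_linear with
      | zero => exact S.zero_mem
      | add a b ha hb => exact S.add_mem ha hb
      | single a b =>
        have : Finsupp.single a b = b • Finsupp.single a (1 : ℂ) := by
          rw [Finsupp.smul_single, smul_eq_mul, mul_one]
        rw [this]; exact S.smul_mem _ (h a)
    obtain ⟨z₀, hz₀⟩ := this
    by_cases hcase : ∃ y₁ : ↥G, Finsupp.single y₁ (1 : ℂ) ∈ S ∧ y₁ ≠ y₀
    · -- two distinct basis vectors in S: β = 1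
      obtain ⟨y₁, hy₁, hne⟩ := hcase
      have e0 := key_eq G α β S hS hy₀ hz₀
      have e1 := key_eq G α β S hS hy₁ hz₀
      have hyc : (y₁ : ℂ) - (y₀ : ℂ) ≠ 0 := by
        intro h
        exact hne (Subtype.coe_injective (by linear_combination h))
      have hβ : β = 1 := by
        have h2 : ((y₁ : ℂ) - (y₀ : ℂ)) * (1 - β) = 0 := by linear_combination e1 - e0
        rcases mul_eq_zero.1 h2 with h | h
        · exact absurd h hyc
        · linear_combination -h
      subst hβ
      have hα : α = -(z₀ : ℂ) := by linear_combination e0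
      refine ⟨?_, Or.inr rfl⟩
      rw [hα]
      exact G.neg_mem z₀.2
    · -- only one basis vector in S: β = 0
      push_neg at hcase
      have hz1 : Finsupp.single (y₀ + g) (1 : ℂ) ∉ S := by
        intro h
        have := hcase _ h
        apply hgc
        have : ((y₀ + g : ↥G) : ℂ) = (y₀ : ℂ) := by rw [this]
        push_cast at this
        linear_combination this
      have hz2 : Finsupp.single (y₀ + g + g) (1 : ℂ) ∉ S := by
        intro h
        have := hcase _ h
        have h2 : ((y₀ + g + g : ↥G) : ℂ) = (y₀ : ℂ) := by rw [this]
        push_cast at h2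
        have : (g : ℂ) + (g : ℂ) = 0 := by linear_combination h2
        have := add_self_eq_zero.1 this
        exact hgc this
      have e1 := key_eq G α β S hS hy₀ hz1
      have e2 := key_eq G α β S hS hy₀ hz2
      push_cast at e1 e2
      have hβ : β = 0 := by
        have h2 : (g : ℂ) * β = 0 := by linear_combination e2 - e1
        rcases mul_eq_zero.1 h2 with h | h
        · exact absurd h hgc
        · exact h
      subst hβ
      have hα : α = -(y₀ : ℂ) := by linear_combination e1
      refine ⟨?_, Or.inl rfl⟩
      rw [hα]
      exact G.neg_mem y₀.2
  · rintro ⟨hα, hβ⟩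
    set a : ↥G := ⟨-α, G.neg_mem hα⟩ with ha
    have hac : (a : ℂ) = -α := rfl
    rcases hβ with hβ | hβ
    · -- β = 0 : span of single a 1
      subst hβ
      refine ⟨ℂ ∙ Finsupp.single a (1 : ℂ), ?_, ?_, ?_⟩
      · intro x v hv
        obtain ⟨c, rfl⟩ := Submodule.mem_span_singleton.1 hv
        rw [map_smul, dActL_single]
        have : (1 : ℂ) * (α + (a : ℂ) + (x : ℂ) * 0) = 0 := by rw [hac]; ring
        rw [this, zero_smul, smul_zero]
        exact Submodule.zero_mem _
      · intro h
        have := Submodule.mem_span_singleton_self (R := ℂ) (Finsupp.single a (1 : ℂ))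
        rw [h] at this
        exact (one_ne_zero <| Finsupp.single_eq_zero.1 ·) ((Submodule.mem_bot ℂ).1 this)
      · intro h
        have hmem : Finsupp.single (a + g) (1 : ℂ) ∈ ℂ ∙ Finsupp.single a (1 : ℂ) := by
          rw [h]; trivial
        obtain ⟨c, hc⟩ := Submodule.mem_span_singleton.1 hmem
        have hne : a ≠ a + g := by
          intro h2
          apply hgc
          have : (a : ℂ) = ((a + g : ↥G) : ℂ) := by rw [← h2]
          push_cast at this
          linear_combination -this
        have := DFunLike.congr_fun hc (a + g)
        rw [Finsupp.smul_apply, Finsupp.single_eq_same, Finsupp.single_apply,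
          if_neg hne] at this
        simp at this
    · -- β = 1 : kernel of evaluation at a
      subst hβ
      refine ⟨LinearMap.ker ((Finsupp.lapply (M := ℂ) (R := ℂ) a)), ?_, ?_, ?_⟩
      · intro x v _
        rw [LinearMap.mem_ker, Finsupp.lapply_apply]
        apply dActL_apply_at
        intro y hxy
        have : (x : ℂ) + (y : ℂ) = -α := by
          rw [← hac, ← hxy]; push_cast; ring
        linear_combination this
      · intro h
        have hmem : Finsupp.single (a + g) (1 : ℂ) ∈ LinearMap.ker ((Finsupp.lapply (M := ℂ) (R := ℂ) a)) := by
          rw [LinearMap.mem_ker, Finsupp.lapply_apply, Finsupp.single_apply]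
          rw [if_neg]
          intro h2
          apply hgc
          have : ((a + g : ↥G) : ℂ) = (a : ℂ) := by rw [h2]
          push_cast at this
          linear_combination this
        rw [h, Submodule.mem_bot] at hmem
        exact (one_ne_zero <| Finsupp.single_eq_zero.1 ·) hmem
      · intro h
        have hmem : Finsupp.single a (1 : ℂ) ∈ LinearMap.ker ((Finsupp.lapply (M := ℂ) (R := ℂ) a)) := by
          rw [h]; trivial
        rw [LinearMap.mem_ker, Finsupp.lapply_apply, Finsupp.single_eq_same] at hmem
        exact one_ne_zero hmem
end

section
/- Let G be a nonzero additive subgroup of ℂ and fix a total order ⪰ on G compatible with addition. Then Vir[G]⁺ = span{d_x : x ≻ 0} and Vir[G]⁻ = span{d_x : x ≺ 0} are Lie subalgebras of Vir[G], and Vir[G] = Vir[G]⁻ ⊕ (ℂd₀ ⊕ ℂC) ⊕ Vir[G]⁺ as vector spaces. -/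
open Finsupp

section Helpers

variable (G : AddSubgroup ℂ)

lemma virSpan_eq (P : ↥G → Prop) :
    Submodule.span ℂ
        {f : Option ↥G →₀ ℂ | ∃ x : ↥G, P x ∧ f = Finsupp.single (some x) (1 : ℂ)} =
      Finsupp.supported ℂ ℂ (Option.some '' {x : ↥G | P x}) := by
  rw [Finsupp.supported_eq_span_single]
  congr 1
  ext f
  simp only [Set.mem_setOf_eq, Set.mem_image]
  constructor
  · rintro ⟨x, hx, rfl⟩; exact ⟨some x, ⟨x, hx, rfl⟩, rfl⟩
  · rintro ⟨a, ⟨x, hx, rfl⟩, rfl⟩; exact ⟨x, hx, rfl⟩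

lemma virSpan_pair_eq :
    Submodule.span ℂ
        ({Finsupp.single (some (0 : ↥G)) (1 : ℂ), Finsupp.single (none : Option ↥G) (1 : ℂ)} :
          Set (Option ↥G →₀ ℂ)) =
      Finsupp.supported ℂ ℂ ({some (0 : ↥G), none} : Set (Option ↥G)) := by
  rw [Finsupp.supported_eq_span_single]
  congr 1
  rw [Set.image_pair]

lemma virBr_mem_supported (S : Set (Option ↥G))
    (hS : ∀ i ∈ S, ∀ j ∈ S, virBasisBr G i j ∈ Finsupp.supported ℂ ℂ S)
    {u v : Option ↥G →₀ ℂ} (hu : u ∈ Finsupp.supported ℂ ℂ S)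
    (hv : v ∈ Finsupp.supported ℂ ℂ S) :
    virBr G u v ∈ Finsupp.supported ℂ ℂ S := by
  rw [Finsupp.mem_supported] at hu hv
  refine Submodule.sum_mem _ fun i hi => Submodule.sum_mem _ fun j hj => ?_
  exact Submodule.smul_mem _ _ (hS i (hu hi) j (hv hj))

lemma virBasisBr_mem_supported {x y : ↥G} (hxy : x + y ≠ 0)
    (S : Set (Option ↥G)) (hmem : some (x + y) ∈ S) :
    virBasisBr G (some x) (some y) ∈ Finsupp.supported ℂ ℂ S := by
  have hne : (x : ℂ) ≠ -(y : ℂ) := by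
    intro h
    apply hxy
    ext
    push_cast
    rw [h]; ring
  simp only [virBasisBr, if_neg hne, add_zero]
  exact Submodule.smul_mem _ _ (Finsupp.single_mem_supported ℂ (1 : ℂ) hmem)

end Helpers

/-- for a total order on `G` compatible with addition, the spans of
`{d_x : x ≻ 0}` and `{d_x : x ≺ 0}` are Lie subalgebras, and `Vir[G]` is the vector space
direct sum of them with `ℂd₀ ⊕ ℂC`. -/

theorem virasoro_triangular_decomposition (G : AddSubgroup ℂ) (hG : G ≠ ⊥)
    [LinearOrder ↥G] (hcompat : ∀ x y z : ↥G, x ≤ y → x + z ≤ y + z) :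
    (∀ u ∈ Submodule.span ℂ
        {f : Option ↥G →₀ ℂ | ∃ x : ↥G, 0 < x ∧ f = Finsupp.single (some x) (1 : ℂ)},
      ∀ v ∈ Submodule.span ℂ
        {f : Option ↥G →₀ ℂ | ∃ x : ↥G, 0 < x ∧ f = Finsupp.single (some x) (1 : ℂ)},
      virBr G u v ∈ Submodule.span ℂ
        {f : Option ↥G →₀ ℂ | ∃ x : ↥G, 0 < x ∧ f = Finsupp.single (some x) (1 : ℂ)}) ∧
    (∀ u ∈ Submodule.span ℂ
        {f : Option ↥G →₀ ℂ | ∃ x : ↥G, x < 0 ∧ f = Finsupp.single (some x) (1 : ℂ)},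
      ∀ v ∈ Submodule.span ℂ
        {f : Option ↥G →₀ ℂ | ∃ x : ↥G, x < 0 ∧ f = Finsupp.single (some x) (1 : ℂ)},
      virBr G u v ∈ Submodule.span ℂ
        {f : Option ↥G →₀ ℂ | ∃ x : ↥G, x < 0 ∧ f = Finsupp.single (some x) (1 : ℂ)}) ∧
    Disjoint
      (Submodule.span ℂ
        {f : Option ↥G →₀ ℂ | ∃ x : ↥G, x < 0 ∧ f = Finsupp.single (some x) (1 : ℂ)})
      (Submodule.span ℂ
        ({Finsupp.single (some (0 : ↥G)) (1 : ℂ), Finsupp.single (none : Option ↥G) (1 : ℂ)} :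
          Set (Option ↥G →₀ ℂ)) ⊔
        Submodule.span ℂ
        {f : Option ↥G →₀ ℂ | ∃ x : ↥G, 0 < x ∧ f = Finsupp.single (some x) (1 : ℂ)}) ∧
    Disjoint
      (Submodule.span ℂ
        ({Finsupp.single (some (0 : ↥G)) (1 : ℂ), Finsupp.single (none : Option ↥G) (1 : ℂ)} :
          Set (Option ↥G →₀ ℂ)))
      (Submodule.span ℂ
        {f : Option ↥G →₀ ℂ | ∃ x : ↥G, 0 < x ∧ f = Finsupp.single (some x) (1 : ℂ)}) ∧
    (Submodule.span ℂ
        {f : Option ↥G →₀ ℂ | ∃ x : ↥G, x < 0 ∧ f = Finsupp.single (some x) (1 : ℂ)} ⊔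
      Submodule.span ℂ
        ({Finsupp.single (some (0 : ↥G)) (1 : ℂ), Finsupp.single (none : Option ↥G) (1 : ℂ)} :
          Set (Option ↥G →₀ ℂ)) ⊔
      Submodule.span ℂ
        {f : Option ↥G →₀ ℂ | ∃ x : ↥G, 0 < x ∧ f = Finsupp.single (some x) (1 : ℂ)}) = ⊤ := by
  classical
  have hpos := virSpan_eq G (fun x => 0 < x)
  have hneg := virSpan_eq G (fun x => x < 0)
  have hpair := virSpan_pair_eq G
  have haddpos : ∀ x y : ↥G, 0 < x → 0 < y → 0 < x + y := by
    intro x y hx hy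
    have h1 : (0 : ↥G) + y ≤ x + y := hcompat 0 x y hx.le
    rw [zero_add] at h1
    exact lt_of_lt_of_le hy h1
  have haddneg : ∀ x y : ↥G, x < 0 → y < 0 → x + y < 0 := by
    intro x y hx hy
    have h1 : x + y ≤ (0 : ↥G) + y := hcompat x 0 y hx.le
    rw [zero_add] at h1
    exact lt_of_le_of_lt h1 hy
  refine ⟨?_, ?_, ?_, ?_, ?_⟩
  · rw [hpos]
    intro u hu v hv
    refine virBr_mem_supported G _ ?_ hu hv
    rintro i ⟨x, hx, rfl⟩ j ⟨y, hy, rfl⟩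
    exact virBasisBr_mem_supported G (ne_of_gt (haddpos x y hx hy)) _
      ⟨x + y, haddpos x y hx hy, rfl⟩
  · rw [hneg]
    intro u hu v hv
    refine virBr_mem_supported G _ ?_ hu hv
    rintro i ⟨x, hx, rfl⟩ j ⟨y, hy, rfl⟩
    exact virBasisBr_mem_supported G (ne_of_lt (haddneg x y hx hy)) _
      ⟨x + y, haddneg x y hx hy, rfl⟩
  · rw [hneg, hpair, hpos, ← Finsupp.supported_union]
    refine Finsupp.disjoint_supported_supported ?_
    rw [Set.disjoint_left]
    rintro a ⟨x, hx, rfl⟩ hb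
    rcases hb with h | ⟨y, hy, hxy⟩
    · rcases h with h | h
      · exact absurd (Option.some.inj h) (by rintro rfl; exact lt_irrefl _ hx)
      · simp at h
    · obtain rfl : y = x := Option.some.inj hxy
      exact absurd hx (not_lt_of_gt hy)
  · rw [hpair, hpos]
    refine Finsupp.disjoint_supported_supported ?_
    rw [Set.disjoint_left]
    rintro a ha ⟨y, hy, rfl⟩
    rcases ha with h | h
    · obtain rfl : y = (0 : ↥G) := Option.some.inj h
      exact lt_irrefl _ hy
    · simp at h
  · rw [hneg, hpair, hpos, ← Finsupp.supported_union, ← Finsupp.supported_union]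
    have : (Option.some '' {x : ↥G | x < 0} ∪ ({some (0 : ↥G), none} : Set (Option ↥G)) ∪
        Option.some '' {x : ↥G | 0 < x}) = Set.univ := by
      ext a
      simp only [Set.mem_univ, iff_true]
      cases a with
      | none => exact Or.inl (Or.inr (Or.inr rfl))
      | some x =>
        rcases lt_trichotomy x 0 with h | h | h
        · exact Or.inl (Or.inl ⟨x, h, rfl⟩)
        · exact Or.inl (Or.inr (Or.inl (by rw [h])))
        · exact Or.inr ⟨x, h, rfl⟩
    rw [this, Finsupp.supported_univ]
end
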